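/- Let (g,≺) be a gflow for a labelled open graph (G,I,O,λ) and suppose v,w ∈ V∖O satisfy v ≺ w. Define g'(v) := g(v) Δ g(w) and g'(u) := g(u) for all other u. Then (g',≺) is a gflow for (G,I,O,λ). -/

import Mathlib

open Set

/-- The three measurement planes. -/
inductive MPlane | XY | XZ | YZ
deriving DecidableEq

/-- The odd neighbourhood of a set `K`: vertices with an odd number of neighbours in `K`. -/
def oddNbhd {V : Type*} (G : SimpleGraph V) (K : Set V) : Set V :=
  {u | Odd (K ∩ G.neighborSet u).ncard}

/-- `(g, prec)` is a gflow for the labelled open graph `(G, I, O, lam)`. -/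
structure GFlow {V : Type*} (G : SimpleGraph V) (I O : Set V) (lam : V → MPlane)
    (g : V → Set V) (prec : V → V → Prop) : Prop where
  irrefl : ∀ v, ¬ prec v v
  trans : ∀ u v w, prec u v → prec v w → prec u w
  noInput : ∀ v, v ∉ O → g v ∩ I = ∅
  g1 : ∀ v, v ∉ O → ∀ w ∈ g v, w ≠ v → prec v w
  g2 : ∀ v, v ∉ O → ∀ w ∈ oddNbhd G (g v), w ≠ v → prec v w
  gXY : ∀ v, v ∉ O → lam v = MPlane.XY → v ∉ g v ∧ v ∈ oddNbhd G (g v)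
  gXZ : ∀ v, v ∉ O → lam v = MPlane.XZ → v ∈ g v ∧ v ∈ oddNbhd G (g v)
  gYZ : ∀ v, v ∉ O → lam v = MPlane.YZ → v ∈ g v ∧ v ∉ oddNbhd G (g v)

lemma odd_ncard_symmDiff {V : Type*} [Fintype V] (A B : Set V) :
    Odd (symmDiff A B).ncard ↔ ¬ (Odd A.ncard ↔ Odd B.ncard) := by
  have hA : A.Finite := A.toFinite
  have hB : B.Finite := B.toFinite
  have h1 : (symmDiff A B).ncard = (A \ B).ncard + (B \ A).ncard := by
    rw [Set.symmDiff_def]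
    exact Set.ncard_union_eq (disjoint_sdiff_sdiff) (hA.diff) (hB.diff)
  have h2 : A.ncard = (A \ B).ncard + (A ∩ B).ncard := by
    rw [← Set.ncard_union_eq (disjoint_sdiff_self_left.mono_right Set.inter_subset_right) (hA.diff)
      (hA.inter_of_left _), Set.diff_union_inter]
  have h3 : B.ncard = (B \ A).ncard + (A ∩ B).ncard := by
    rw [Set.inter_comm A B,
      ← Set.ncard_union_eq (disjoint_sdiff_self_left.mono_right Set.inter_subset_right)
      (hB.diff) (hB.inter_of_left _), Set.diff_union_inter]
  rw [h1, h2, h3]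
  simp only [Nat.odd_iff]
  omega

lemma mem_oddNbhd_symmDiff {V : Type*} [Fintype V] (G : SimpleGraph V) (A B : Set V) (u : V) :
    u ∈ oddNbhd G (symmDiff A B) ↔ ¬ (u ∈ oddNbhd G A ↔ u ∈ oddNbhd G B) := by
  have hAB : symmDiff A B ∩ G.neighborSet u
      = symmDiff (A ∩ G.neighborSet u) (B ∩ G.neighborSet u) := by
    ext x
    simp only [Set.mem_inter_iff, Set.mem_symmDiff]
    tauto
  simp only [oddNbhd, Set.mem_setOf_eq, hAB]
  exact odd_ncard_symmDiff _ _

/-- Replacing `g v` by `g v Δ g w` for some `w` with `v ≺ w` yields another gflow. -/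
theorem gflow_symmDiff_successor {V : Type*} [Fintype V] [DecidableEq V]
    (G : SimpleGraph V) (I O : Set V) (lam : V → MPlane)
    (g : V → Set V) (prec : V → V → Prop)
    (h : GFlow G I O lam g prec) (v w : V) (hv : v ∉ O) (hw : w ∉ O)
    (hvw : prec v w) :
    GFlow G I O lam (fun x => if x = v then symmDiff (g v) (g w) else g x) prec := by
  have hvne : v ≠ w := fun e => h.irrefl v (e ▸ hvw)
  -- v is not in g w nor in oddNbhd of g w
  have hvgw : v ∉ g w := by
    intro hm
    exact h.irrefl v (h.trans v w v hvw (h.g1 w hw v hm hvne))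
  have hvow : v ∉ oddNbhd G (g w) := by
    intro hm
    exact h.irrefl v (h.trans v w v hvw (h.g2 w hw v hm hvne))
  have hmemv : ∀ x, x = v → (x ∈ symmDiff (g v) (g w) ↔ x ∈ g v) := by
    rintro x rfl
    rw [Set.mem_symmDiff]
    constructor
    · rintro (⟨h1, -⟩ | ⟨h1, -⟩)
      · exact h1
      · exact absurd h1 hvgw
    · exact fun h1 => Or.inl ⟨h1, hvgw⟩
  have hoddv : v ∈ oddNbhd G (symmDiff (g v) (g w)) ↔ v ∈ oddNbhd G (g v) := by
    rw [mem_oddNbhd_symmDiff]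
    constructor
    · intro h1
      by_contra h2
      exact h1 ⟨fun h3 => absurd h3 h2, fun h3 => absurd h3 hvow⟩
    · intro h1 h2
      exact hvow (h2.mp h1)
  constructor
  · exact h.irrefl
  · exact h.trans
  · intro u hu
    by_cases hc : u = v
    · subst hc
      simp only [eq_self_iff_true, if_true, if_pos rfl]
      rw [Set.eq_empty_iff_forall_notMem]
      intro x ⟨hx, hxI⟩
      rw [Set.mem_symmDiff] at hx
      rcases hx with ⟨h1, -⟩ | ⟨h1, -⟩
      · exact (Set.eq_empty_iff_forall_notMem.mp (h.noInput u hu)) x ⟨h1, hxI⟩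
      · exact (Set.eq_empty_iff_forall_notMem.mp (h.noInput w hw)) x ⟨h1, hxI⟩
    · simpa only [if_neg hc] using h.noInput u hu
  · intro u hu x hx hxu
    by_cases hc : u = v
    · subst hc
      simp only [eq_self_iff_true, if_true, if_pos rfl, Set.mem_symmDiff] at hx
      rcases hx with ⟨h1, -⟩ | ⟨h1, -⟩
      · exact h.g1 u hu x h1 hxu
      · by_cases hxw : x = w
        · exact hxw ▸ hvw
        · exact h.trans u w x hvw (h.g1 w hw x h1 hxw)
    · simp only [if_neg hc] at hx
      exact h.g1 u hu x hx hxu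
  · intro u hu x hx hxu
    by_cases hc : u = v
    · subst hc
      simp only [eq_self_iff_true, if_true, if_pos rfl] at hx
      rw [mem_oddNbhd_symmDiff] at hx
      by_cases h1 : x ∈ oddNbhd G (g u)
      · exact h.g2 u hu x h1 hxu
      · have h2 : x ∈ oddNbhd G (g w) := by tauto
        by_cases hxw : x = w
        · exact hxw ▸ hvw
        · exact h.trans u w x hvw (h.g2 w hw x h2 hxw)
    · simp only [if_neg hc] at hx
      exact h.g2 u hu x hx hxu
  · intro u hu hl
    by_cases hc : u = v
    · subst hc
      simp only [eq_self_iff_true, if_true, if_pos rfl]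
      rw [hmemv u rfl, hoddv]
      exact h.gXY u hu hl
    · simpa only [if_neg hc] using h.gXY u hu hl
  · intro u hu hl
    by_cases hc : u = v
    · subst hc
      simp only [eq_self_iff_true, if_true, if_pos rfl]
      rw [hmemv u rfl, hoddv]
      exact h.gXZ u hu hl
    · simpa only [if_neg hc] using h.gXZ u hu hl
  · intro u hu hl
    by_cases hc : u = v
    · subst hc
      simp only [eq_self_iff_true, if_true, if_pos rfl]
      rw [hmemv u rfl, hoddv]
      exact h.gYZ u hu hl
    · simpa only [if_neg hc] using h.gYZ u hu hl
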